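/- For all integers a, b, c, every integer m ≥ 1, and every real number x, it is impossible that both a + b·x + (c/2)·x² = 0 and m² = 4π²·(b + c·x)² hold. (Equivalently, the determinant -π²·(a + bx + ½cx² + (i/2π)m + i(b + cx))·(a + bx + ½cx² + (i/2π)m - i(b + cx)) arising from the Fourier analysis of pseudoholomorphic pluricanonical sections on the nilmanifold 𝒩 never vanishes.) -/

import Mathlib

open Real

noncomputable section PiSqAux

open intervalIntegral MeasureTheory.MeasureSpace Set Polynomial Real
open scoped Nat

namespace PiSqAux

/-- The sequence of integrals used for Cartwright's proof. -/
def I (n : ℕ) (θ : ℝ) : ℝ := ∫ x in (-1)..1, (1 - x ^ 2) ^ n * cos (x * θ)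

variable {n : ℕ} {θ : ℝ}

lemma I_zero : I 0 θ * θ = 2 * sin θ := by
  rw [mul_comm, I]
  simp [mul_integral_comp_mul_right, two_mul]

lemma recursion' (n : ℕ) :
    I (n + 1) θ * θ ^ 2 = - (2 * 2 * ((n + 1) * (0 ^ n * cos θ))) +
      2 * (n + 1) * (2 * n + 1) * I n θ - 4 * (n + 1) * n * I (n - 1) θ := by
  rw [I]
  let f (x : ℝ) : ℝ := 1 - x ^ 2
  let u₁ (x : ℝ) : ℝ := f x ^ (n + 1)
  let u₁' (x : ℝ) : ℝ := - (2 * (n + 1) * x * f x ^ n)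
  let v₁ (x : ℝ) : ℝ := sin (x * θ)
  let v₁' (x : ℝ) : ℝ := cos (x * θ) * θ
  let u₂ (x : ℝ) : ℝ := x * (f x) ^ n
  let u₂' (x : ℝ) : ℝ := (f x) ^ n - 2 * n * x ^ 2 * (f x) ^ (n - 1)
  let v₂ (x : ℝ) : ℝ := cos (x * θ)
  let v₂' (x : ℝ) : ℝ := -sin (x * θ) * θ
  have hfd : Continuous f := by fun_prop
  have hu₁d : Continuous u₁' := by fun_prop
  have hv₁d : Continuous v₁' := by fun_prop
  have hu₂d : Continuous u₂' := by fun_prop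
  have hv₂d : Continuous v₂' := by fun_prop
  have hu₁_eval_one : u₁ 1 = 0 := by simp only [u₁, f]; simp
  have hu₁_eval_neg_one : u₁ (-1) = 0 := by simp only [u₁, f]; simp
  have t : u₂ 1 * v₂ 1 - u₂ (-1) * v₂ (-1) = 2 * (0 ^ n * cos θ) := by simp [u₂, v₂, f, ← two_mul]
  have hf (x) : HasDerivAt f (- 2 * x) x := by
    refine ((hasDerivAt_pow 2 x).const_sub 1).congr_deriv ?_
    simp
  have hu₁ (x) : HasDerivAt u₁ (u₁' x) x := by
    refine ((hf x).pow (n + 1)).congr_deriv ?_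
    simp only [Nat.add_succ_sub_one, u₁', Nat.cast_add_one]
    ring
  have hv₁ (x) : HasDerivAt v₁ (v₁' x) x := (hasDerivAt_mul_const θ).sin
  have hu₂ (x) : HasDerivAt u₂ (u₂' x) x := by
    refine ((hasDerivAt_id' x).mul ((hf x).pow n)).congr_deriv ?_
    simp only [u₂', Pi.pow_apply]
    ring
  have hv₂ (x) : HasDerivAt v₂ (v₂' x) x := (hasDerivAt_mul_const θ).cos
  convert_to (∫ (x : ℝ) in (-1)..1, u₁ x * v₁' x) * θ = _ using 1
  · simp_rw [u₁, v₁', ← intervalIntegral.integral_mul_const, sq θ, mul_assoc]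
    rfl
  rw [integral_mul_deriv_eq_deriv_mul (fun x _ => hu₁ x) (fun x _ => hv₁ x)
    (hu₁d.intervalIntegrable _ _) (hv₁d.intervalIntegrable _ _), hu₁_eval_one, hu₁_eval_neg_one,
    zero_mul, zero_mul, sub_zero, zero_sub, ← integral_neg, ← integral_mul_const]
  convert_to ((-2 : ℝ) * (n + 1)) * ∫ (x : ℝ) in (-1)..1, (u₂ x * v₂' x) = _ using 1
  · rw [← integral_const_mul]
    congr 1 with x
    dsimp [u₁', v₁, u₂, v₂']
    ring
  rw [integral_mul_deriv_eq_deriv_mul (fun x _ => hu₂ x) (fun x _ => hv₂ x)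
    (hu₂d.intervalIntegrable _ _) (hv₂d.intervalIntegrable _ _),
    mul_sub, t, neg_mul, neg_mul, neg_mul, sub_neg_eq_add]
  have this (x) : u₂' x = (2 * n + 1) * f x ^ n - 2 * n * f x ^ (n - 1) := by
    cases n with
    | zero => simp [u₂']
    | succ n => ring!
  simp_rw [this, sub_mul, mul_assoc _ _ (v₂ _)]
  have : Continuous v₂ := by fun_prop
  rw [mul_mul_mul_comm, integral_sub, mul_sub, add_sub_assoc]
  · congr 1
    simp_rw [integral_const_mul]
    ring!
  all_goals exact Continuous.intervalIntegrable (by fun_prop) _ _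

lemma recursion (n : ℕ) :
    I (n + 2) θ * θ ^ 2 =
      2 * (n + 2) * (2 * n + 3) * I (n + 1) θ - 4 * (n + 2) * (n + 1) * I n θ := by
  rw [recursion' (n + 1)]
  simp
  ring!

lemma I_one : I 1 θ * θ ^ 3 = 4 * sin θ - 4 * θ * cos θ := by
  rw [_root_.pow_succ, ← mul_assoc, recursion' 0, sub_mul, add_mul, mul_assoc _ (I 0 θ), I_zero]
  ring

/-- Integer polynomial with `I n θ * θ^(2n+1) = n! * (sp n (θ²) sin θ + θ * cp n (θ²) cos θ)`. -/
def sp : ℕ → ℤ[X]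
  | 0 => C 2
  | 1 => C 4
  | (n+2) => ((2 : ℤ) * (2 * n + 3)) • sp (n + 1) + monomial 1 (-4) * sp n

def cp : ℕ → ℤ[X]
  | 0 => 0
  | 1 => C (-4)
  | (n+2) => ((2 : ℤ) * (2 * n + 3)) • cp (n + 1) + monomial 1 (-4) * cp n

lemma sp_natDegree_le : ∀ n : ℕ, (sp n).natDegree ≤ n
  | 0 => by simp [sp]
  | 1 => by simp only [natDegree_C, mul_one, zero_le', sp]
  | n + 2 => by
      rw [sp]
      refine natDegree_add_le_of_degree_le ((natDegree_smul_le _ _).trans ?_) ?_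
      · exact (sp_natDegree_le (n + 1)).trans (by simp)
      refine natDegree_mul_le.trans ?_
      have h1 : (monomial 1 (-4 : ℤ)).natDegree ≤ 1 := natDegree_monomial_le _
      have h2 := sp_natDegree_le n
      omega

lemma sp_add_cp_eval (θ : ℝ) :
    ∀ n : ℕ,
      I n θ * θ ^ (2 * n + 1) = n ! * ((sp n).eval₂ (Int.castRingHom _) (θ ^ 2) * sin θ +
        θ * (cp n).eval₂ (Int.castRingHom _) (θ ^ 2) * cos θ)
  | 0 => by simp [sp, cp, I_zero]
  | 1 => by
      simp only [sp, cp, eval₂_C, eq_intCast, eval₂_neg, eval₂_ofNat, Int.cast_neg,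
        Int.cast_ofNat, Nat.factorial_one, Nat.cast_one]
      linear_combination (I_one (θ := θ))
  | n + 2 => by
      calc I (n + 2) θ * θ ^ (2 * (n + 2) + 1) = I (n + 2) θ * θ ^ 2 * θ ^ (2 * n + 3) := by ring
        _ = 2 * (n + 2) * (2 * n + 3) * (I (n + 1) θ * θ ^ (2 * (n + 1) + 1)) -
            4 * (n + 2) * (n + 1) * θ ^ 2 * (I n θ * θ ^ (2 * n + 1)) := by rw [recursion]; ring
        _ = _ := by
            simp [sp_add_cp_eval, sp, cp, Nat.factorial_succ]
            ring

lemma is_integer {p : ℤ[X]} (a b : ℤ) {k : ℕ} (hp : p.natDegree ≤ k) :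
    ∃ z : ℤ, p.eval₂ (Int.castRingHom ℝ) (a / b) * b ^ k = z := by
  rcases eq_or_ne b 0 with rfl | hb
  · rcases k.eq_zero_or_pos with rfl | hk
    · exact ⟨p.coeff 0, by simp⟩
    exact ⟨0, by simp [hk.ne']⟩
  refine ⟨∑ i ∈ p.support, p.coeff i * a ^ i * b ^ (k - i), ?_⟩
  conv => lhs; rw [← sum_monomial_eq p]
  rw [eval₂_sum, sum, Finset.sum_mul, Int.cast_sum]
  simp only [eval₂_monomial, eq_intCast, div_pow, Int.cast_mul, Int.cast_pow]
  refine Finset.sum_congr rfl (fun i hi => ?_)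
  have ik := (le_natDegree_of_mem_supp i hi).trans hp
  rw [mul_assoc, div_mul_comm, ← Int.cast_pow, ← Int.cast_pow, ← Int.cast_pow,
    ← pow_sub_mul_pow b ik, ← Int.cast_div_charZero, Int.mul_ediv_cancel _ (pow_ne_zero _ hb),
    ← mul_assoc, mul_right_comm, ← Int.cast_pow]
  exact dvd_mul_left _ _

open Filter

lemma I_pos : 0 < I n (π / 2) := by
  refine integral_pos (by norm_num) (Continuous.continuousOn (by continuity)) ?_ ⟨0, by simp⟩
  refine fun x hx => mul_nonneg (pow_nonneg ?_ _) ?_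
  · rw [sub_nonneg, sq_le_one_iff_abs_le_one, abs_le]
    exact ⟨hx.1.le, hx.2⟩
  refine cos_nonneg_of_neg_pi_div_two_le_of_le ?_ ?_ <;>
  nlinarith [hx.1, hx.2, pi_pos]

lemma I_le (n : ℕ) : I n (π / 2) ≤ 2 := by
  rw [← norm_of_nonneg I_pos.le]
  refine (norm_integral_le_of_norm_le_const ?_).trans (show (1 : ℝ) * _ ≤ _ by norm_num)
  intros x hx
  simp only [uIoc_of_le, neg_le_self_iff, zero_le_one, mem_Ioc] at hx
  rw [norm_eq_abs, abs_mul, abs_pow]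
  refine mul_le_one₀ (pow_le_one₀ (abs_nonneg _) ?_) (abs_nonneg _) (abs_cos_le_one _)
  rw [abs_le]
  constructor <;> nlinarith

lemma not_irrational_exists_rep {x : ℝ} :
    ¬Irrational x → ∃ (a : ℤ) (b : ℕ), 0 < b ∧ x = a / b := by
  rw [Irrational, not_not, mem_range]
  rintro ⟨q, rfl⟩
  exact ⟨q.num, q.den, q.pos, by exact_mod_cast (Rat.num_div_den _).symm⟩

theorem irrational_pi_sq : Irrational (π ^ 2) := by
  apply Irrational.of_div_natCast 4
  by_contra h'
  obtain ⟨a, b, hb, h⟩ := not_irrational_exists_rep h'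
  have hb' : (0 : ℝ) < b := by exact_mod_cast hb
  have ha : (0 : ℝ) < a := by
    have h4 : (0 : ℝ) < π ^ 2 / (4 : ℕ) := by positivity
    have : 0 < (a : ℝ) / b := h ▸ h4
    rwa [lt_div_iff₀ hb', zero_mul] at this
  have hsq : (π / 2) ^ 2 = (a : ℝ) / b := by
    rw [← h]; push_cast; ring
  have k (n : ℕ) : 0 < (a : ℝ) ^ n / n ! := by positivity
  have j : ∀ᶠ n : ℕ in atTop, π / 2 * ((a : ℝ) ^ n / n !) * I n (π / 2) < 1 := by
    have := (FloorSemiring.tendsto_pow_div_factorial_atTop (a : ℝ)).eventually_lt_const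
      (show (0 : ℝ) < 1 / π by positivity)
    filter_upwards [this] with n hn
    have h1 : π / 2 * ((a : ℝ) ^ n / n !) * I n (π / 2) ≤ π / 2 * ((a : ℝ) ^ n / n !) * 2 :=
      mul_le_mul_of_nonneg_left (I_le _) (by positivity)
    have h2 : π / 2 * ((a : ℝ) ^ n / n !) * 2 = π * ((a : ℝ) ^ n / n !) := by ring
    rw [lt_div_iff₀ pi_pos] at hn
    calc π / 2 * ((a : ℝ) ^ n / n !) * I n (π / 2) ≤ π * ((a : ℝ) ^ n / n !) := by
          rw [← h2] at *; exact h1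
      _ = (a : ℝ) ^ n / n ! * π := by ring
      _ < 1 := hn
  obtain ⟨n, hn⟩ := j.exists
  have hn' : 0 < π / 2 * ((a : ℝ) ^ n / n !) * I n (π / 2) :=
    mul_pos (mul_pos (by positivity) (k _)) I_pos
  obtain ⟨z, hz⟩ : ∃ z : ℤ, (sp n).eval₂ (Int.castRingHom ℝ) (a / b) * (b : ℤ) ^ n = z :=
    is_integer a b (sp_natDegree_le _)
  have e := sp_add_cp_eval (π / 2) n
  rw [cos_pi_div_two, mul_zero, add_zero] at e
  have hpow : (π / 2) ^ (2 * n + 1) = π / 2 * ((a : ℝ) / b) ^ n := by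
    rw [pow_succ', pow_mul, hsq]
  rw [hpow, ← hsq] at e
  rw [hsq] at e
  -- e : I n (π/2) * (π/2 * (a/b)^n) = n! * (eval₂ (sp n) (a/b) * sin (π/2))
  rw [sin_pi_div_two, mul_one] at e
  have hfact : (0 : ℝ) < (n ! : ℝ) := by positivity
  have hbn : ((b : ℝ)) ^ n ≠ 0 := by positivity
  have hzeq : π / 2 * ((a : ℝ) ^ n / n !) * I n (π / 2) = (z : ℝ) := by
    have hz' : (sp n).eval₂ (Int.castRingHom ℝ) ((a : ℝ) / b) * (b : ℝ) ^ n = (z : ℝ) := by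
      exact_mod_cast hz
    field_simp at e hz' ⊢
    rw [← hz', ← mul_assoc, ← e, div_pow, mul_assoc (π * _), div_mul_cancel₀ _ hbn]
  rw [hzeq] at hn hn'
  have : (0 : ℤ) < z := by exact_mod_cast hn'
  have : (z : ℝ) ≥ 1 := by exact_mod_cast this
  linarith

end PiSqAux

end PiSqAux

theorem stmt_5 (a b c m : ℤ) (hm : 1 ≤ m) (x : ℝ) :
    ¬(((a : ℝ) + (b : ℝ) * x + (c : ℝ) / 2 * x ^ 2 = 0) ∧
      ((m : ℝ) ^ 2 = 4 * π ^ 2 * ((b : ℝ) + (c : ℝ) * x) ^ 2)) := by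
  rintro ⟨h1, h2⟩
  have hD : (m : ℝ) ^ 2 = 4 * π ^ 2 * ((b : ℝ) ^ 2 - 2 * a * c) := by
    linear_combination h2 + 8 * π ^ 2 * (c : ℝ) * h1
  set D : ℤ := b ^ 2 - 2 * a * c with hDdef
  have hDcast : (m : ℝ) ^ 2 = 4 * π ^ 2 * (D : ℝ) := by
    rw [hDdef]; push_cast; linarith [hD]
  have hm0 : (0 : ℝ) < (m : ℝ) ^ 2 := by
    have : (0 : ℝ) < (m : ℝ) := by exact_mod_cast hm
    positivity
  have hD0 : (D : ℝ) ≠ 0 := by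
    intro h0
    rw [h0, mul_zero] at hDcast
    linarith
  have hpi2 : π ^ 2 = ((m ^ 2 : ℤ) : ℝ) / ((4 * D : ℤ) : ℝ) := by
    push_cast
    field_simp
    linarith [hDcast]
  have := PiSqAux.irrational_pi_sq
  rw [irrational_iff_ne_rational] at this
  exact this (m ^ 2) (4 * D) (by have : D ≠ 0 := by exact_mod_cast hD0
                                 omega) hpi2
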